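/- arXiv:1402.1332 — 5 statements merged into one kernel-verified Lean document; each statement's English description precedes it below -/
import Mathlib

section
/- Let Q(x,y,z) = x²+y²+10z² and Q'(x,y,z) = 2x²+2y²+3z²−2xz. Then Q and Q' are equivalent over ℝ (there exists M ∈ GL₃(ℝ) with Q(M·v) = Q'(v) for all v ∈ ℝ³) and over ℤ_p for every prime p (for each prime p there exists M_p ∈ GL₃(ℤ_p) with Q(M_p·v) = Q'(v) for all v ∈ ℤ_p³), but Q and Q' are not equivalent over ℤ (there is no M ∈ GL₃(ℤ) with Q(M·v) = Q'(v) for all v ∈ ℤ³). -/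
/-- The ternary quadratic form `x² + y² + 10z²` over a commutative ring. -/
def QA {R : Type*} [CommRing R] (v : Fin 3 → R) : R :=
  v 0 ^ 2 + v 1 ^ 2 + 10 * v 2 ^ 2

/-- The ternary quadratic form `2x² + 2y² + 3z² - 2xz` over a commutative ring. -/
def QB {R : Type*} [CommRing R] (v : Fin 3 → R) : R :=
  2 * v 0 ^ 2 + 2 * v 1 ^ 2 + 3 * v 2 ^ 2 - 2 * v 0 * v 2

/-- If `2` is invertible with inverse `c`, an explicit matrix transforms `QB` into `QA`. -/
theorem aux_half {R : Type*} [CommRing R] (c : R) (h : 2 * c = 1) :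
    IsUnit (Matrix.det !![1, 1, -c; 1, -1, -c; 0, 0, c]) ∧
    ∀ v : Fin 3 → R, QA ((!![1, 1, -c; 1, -1, -c; 0, 0, c]).mulVec v) = QB v := by
  constructor
  · have : Matrix.det !![1, 1, -c; 1, -1, -c; 0, 0, c] = -1 := by
      simp [Matrix.det_fin_three]
      linear_combination (-1 : R) * h
    rw [this]; exact isUnit_one.neg
  · intro v
    simp [QA, QB, Matrix.mulVec, dotProduct, Fin.sum_univ_three]
    linear_combination (3 * v 2 ^ 2 + 6 * v 2 ^ 2 * c - 2 * v 0 * v 2) * h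

/-- If `3` is invertible with inverse `c`, an explicit matrix transforms `QB` into `QA`. -/
theorem aux_third {R : Type*} [CommRing R] (c : R) (h : 3 * c = 1) :
    IsUnit (Matrix.det !![-1, -2*c, -c; -1, 2*c, 4*c; 0, -c, c]) ∧
    ∀ v : Fin 3 → R, QA ((!![-1, -2*c, -c; -1, 2*c, 4*c; 0, -c, c]).mulVec v) = QB v := by
  constructor
  · have : Matrix.det !![-1, -2*c, -c; -1, 2*c, 4*c; 0, -c, c] = -1 := by
      simp [Matrix.det_fin_three]
      linear_combination (-(3*c + 1)) * h
    rw [this]; exact isUnit_one.neg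
  · intro v
    simp [QA, QB, Matrix.mulVec, dotProduct, Fin.sum_univ_three]
    linear_combination
      (3 * v 2 ^ 2 + 9 * v 2 ^ 2 * c + 2 * v 1 ^ 2 + 6 * v 1 ^ 2 * c - 2 * v 0 * v 2) * h

/-- An integer not divisible by `p` is a unit in `ℤ_[p]`. -/
lemma unit_int (p : ℕ) [Fact p.Prime] (n : ℤ) (hn : ¬ (p:ℤ) ∣ n) : IsUnit (n : ℤ_[p]) := by
  rw [PadicInt.isUnit_iff]
  have h1 := PadicInt.norm_le_one (n : ℤ_[p])
  have h2 := (PadicInt.norm_int_lt_one_iff_dvd n).not.mpr hn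
  push_cast at h1 h2 ⊢
  linarith [lt_or_eq_of_le h1]

/-- `QB` does not represent `1` over `ℤ`. -/
lemma QB_ne_one (v : Fin 3 → ℤ) : QB v ≠ 1 := by
  intro hQB
  unfold QB at hQB
  have key : (2 * v 0 - v 2) ^ 2 + 4 * v 1 ^ 2 + 5 * v 2 ^ 2 = 2 := by
    linear_combination 2 * hQB
  have hz : v 2 = 0 := by
    by_contra hne
    have h1 : 1 ≤ (v 2) ^ 2 := by
      have : 0 < (v 2) ^ 2 := by positivity
      omega
    nlinarith [sq_nonneg (2 * v 0 - v 2), sq_nonneg (v 1)]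
  rw [hz] at key
  have h4 : 4 * v 0 ^ 2 + 4 * v 1 ^ 2 = 2 := by linear_combination key
  have h0 := sq_nonneg (v 0)
  have h1 := sq_nonneg (v 1)
  set a := v 0 ^ 2
  set b := v 1 ^ 2
  omega

/-- The forms `x²+y²+10z²` and `2x²+2y²+3z²-2xz` are equivalent over `ℝ` and over `ℤ_p`
for every prime `p`, but not over `ℤ`. -/
theorem stmt_10 :
    (∃ M : Matrix (Fin 3) (Fin 3) ℝ, IsUnit M.det ∧
      ∀ v : Fin 3 → ℝ, QA (M.mulVec v) = QB v) ∧
    (∀ (p : ℕ) [Fact p.Prime], ∃ M : Matrix (Fin 3) (Fin 3) ℤ_[p], IsUnit M.det ∧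
      ∀ v : Fin 3 → ℤ_[p], QA (M.mulVec v) = QB v) ∧
    ¬(∃ M : Matrix (Fin 3) (Fin 3) ℤ, IsUnit M.det ∧
      ∀ v : Fin 3 → ℤ, QA (M.mulVec v) = QB v) := by
  refine ⟨⟨_, aux_half (2⁻¹ : ℝ) (by norm_num)⟩, ?_, ?_⟩
  · intro p hp
    by_cases h2 : p = 2
    · -- use the matrix with denominator 3
      subst h2
      have h3 : IsUnit ((3 : ℤ) : ℤ_[2]) := unit_int 2 3 (by omega)
      obtain ⟨c, hc⟩ := h3.exists_right_inv
      have hc' : (3 : ℤ_[2]) * c = 1 := by exact_mod_cast hc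
      exact ⟨_, aux_third c hc'⟩
    · -- p is odd; use the matrix with denominator 2
      have h2' : IsUnit ((2 : ℤ) : ℤ_[p]) := by
        apply unit_int
        intro h
        have hd : p ∣ 2 := by exact_mod_cast h
        have := Nat.le_of_dvd two_pos hd
        have := (Fact.out : p.Prime).two_le
        omega
      obtain ⟨c, hc⟩ := h2'.exists_right_inv
      have hc' : (2 : ℤ_[p]) * c = 1 := by exact_mod_cast hc
      exact ⟨_, aux_half c hc'⟩
  · rintro ⟨M, hdet, hQ⟩
    -- QB represents 1 via v = M⁻¹ e₀, contradiction
    set e0 : Fin 3 → ℤ := ![1, 0, 0] with he0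
    have hinv : M * M⁻¹ = 1 := Matrix.mul_nonsing_inv M hdet
    have hMv : M.mulVec (M⁻¹.mulVec e0) = e0 := by
      rw [Matrix.mulVec_mulVec, hinv, Matrix.one_mulVec]
    have h1 := hQ (M⁻¹.mulVec e0)
    rw [hMv] at h1
    have hQA : QA e0 = 1 := by norm_num [QA, he0, Matrix.cons_val_two, Matrix.tail_cons, Matrix.head_cons]
    rw [hQA] at h1
    exact QB_ne_one _ h1.symm
end

section
/- Let f(x,y) = ax²+bxy+cy² be a positive definite primitive integral binary quadratic form (a > 0, gcd(a,b,c) = 1) of discriminant D = b²−4ac < 0. Then the number of matrices A ∈ SL₂(ℤ) with f(A·v) = f(v) for all v ∈ ℤ² equals 6 if D = −3, equals 4 if D = −4, and equals 2 if D < −4. -/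
/-- The binary quadratic form `a x² + b x y + c y²` encoded as the triple `(a, b, c)`. -/
def bqf (f : ℤ × ℤ × ℤ) (x y : ℤ) : ℤ := f.1 * x ^ 2 + f.2.1 * x * y + f.2.2 * y ^ 2

theorem bqf_auto_surj (a b c : ℤ) (ha : 0 < a) (hprim : Int.gcd a (Int.gcd b c) = 1)
    (A : Matrix (Fin 2) (Fin 2) ℤ) (hdet : A.det = 1)
    (hf : ∀ x y : ℤ, bqf (a, b, c) (A 0 0 * x + A 0 1 * y) (A 1 0 * x + A 1 1 * y) =
          bqf (a, b, c) x y) :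
    ∃ p u : ℤ, p^2 + b*p*u + a*c*u^2 = 1 ∧
      A = !![p, -c*u; a*u, p+b*u] := by
  obtain ⟨p, hp⟩ : ∃ p, A 0 0 = p := ⟨_, rfl⟩
  obtain ⟨q, hqd⟩ : ∃ q, A 0 1 = q := ⟨_, rfl⟩
  obtain ⟨r, hrd⟩ : ∃ r, A 1 0 = r := ⟨_, rfl⟩
  obtain ⟨s, hsd⟩ : ∃ s, A 1 1 = s := ⟨_, rfl⟩
  rw [Matrix.det_fin_two, hp, hqd, hrd, hsd] at hdet
  simp only [hp, hqd, hrd, hsd] at hf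
  have hdet2 : p * s - q * r = 1 := by linarith
  have key : ∀ x y : ℤ, a*(p*x+q*y)^2 + b*(p*x+q*y)*(r*x+s*y) + c*(r*x+s*y)^2
      = a*x^2 + b*x*y + c*y^2 := by
    intro x y; have := hf x y; simp only [bqf] at this; linear_combination this
  have E1 : a*p^2 + b*p*r + c*r^2 = a := by linear_combination key 1 0
  have E3 : 2*a*p*q + b*(p*s+q*r) + 2*c*r*s = b := by
    linear_combination key 1 1 - key 1 0 - key 0 1
  have hstar : a*p*q + b*q*r + c*r*s = 0 := by
    have h2 : 2*(a*p*q + b*q*r + c*r*s) = 0 := by linear_combination E3 - b*hdet2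
    linarith
  have haq : a*q + c*r = 0 := by linear_combination -q*E1 + p*hstar - c*r*hdet2
  have has : a*s - a*p - b*r = 0 := by linear_combination r*hstar - s*E1 + (a*p+b*r)*hdet2
  have h1 : b*r = a*(s-p) := by linear_combination -has
  have h2 : c*r = a*(-q) := by linear_combination haq
  have hg : a ∣ (Int.gcd b c : ℤ) * r :=
    ⟨Int.gcdA b c * (s-p) + Int.gcdB b c * (-q), by
      linear_combination r * (Int.gcd_eq_gcd_ab b c) + Int.gcdA b c * h1 + Int.gcdB b c * h2⟩
  have hcop : IsCoprime a ((Int.gcd b c : ℤ)) := by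
    rw [Int.isCoprime_iff_gcd_eq_one]; exact hprim
  have har : a ∣ r := hcop.dvd_of_dvd_mul_left hg
  obtain ⟨u, hu⟩ := har
  have hq : q = -c*u := by
    have h3 : a * q = a * (-c*u) := by linear_combination haq + (-c)*hu
    exact mul_left_cancel₀ ha.ne' h3
  have hs : s = p + b*u := by
    have h3 : a * s = a * (p + b*u) := by linear_combination has + b*hu
    exact mul_left_cancel₀ ha.ne' h3
  refine ⟨p, u, ?_, ?_⟩
  · linear_combination hdet2 + (a*u) * hq - p * hs + q * hu
  · ext i j
    fin_cases i <;> fin_cases j <;>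
      simp [hp, hqd, hrd, hsd, hq, hs, hu]

/-- The explicit map from solutions of `p² + bpu + acu² = 1` to automorphs. -/
def bqfToAuto (a b c : ℤ)
    (pu : {pu : ℤ × ℤ // pu.1^2 + b*pu.1*pu.2 + a*c*pu.2^2 = 1}) :
    {A : Matrix (Fin 2) (Fin 2) ℤ // A.det = 1 ∧
        ∀ x y : ℤ, bqf (a, b, c) (A 0 0 * x + A 0 1 * y) (A 1 0 * x + A 1 1 * y) =
          bqf (a, b, c) x y} :=
  ⟨!![pu.1.1, -c*pu.1.2; a*pu.1.2, pu.1.1 + b*pu.1.2], by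
      rw [Matrix.det_fin_two_of]; linear_combination pu.2, by
      intro x y
      have h := pu.2
      have e00 : (!![pu.1.1, -c*pu.1.2; a*pu.1.2, pu.1.1 + b*pu.1.2] : Matrix (Fin 2) (Fin 2) ℤ) 0 0 = pu.1.1 := by simp
      have e01 : (!![pu.1.1, -c*pu.1.2; a*pu.1.2, pu.1.1 + b*pu.1.2] : Matrix (Fin 2) (Fin 2) ℤ) 0 1 = -c*pu.1.2 := by simp
      have e10 : (!![pu.1.1, -c*pu.1.2; a*pu.1.2, pu.1.1 + b*pu.1.2] : Matrix (Fin 2) (Fin 2) ℤ) 1 0 = a*pu.1.2 := by simp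
      have e11 : (!![pu.1.1, -c*pu.1.2; a*pu.1.2, pu.1.1 + b*pu.1.2] : Matrix (Fin 2) (Fin 2) ℤ) 1 1 = pu.1.1 + b*pu.1.2 := by simp
      rw [e00, e01, e10, e11]
      simp only [bqf]
      linear_combination (a*x^2 + b*x*y + c*y^2) * h⟩

theorem bqf_card_eq (a b c : ℤ) (ha : 0 < a) (hprim : Int.gcd a (Int.gcd b c) = 1) :
    Nat.card {A : Matrix (Fin 2) (Fin 2) ℤ // A.det = 1 ∧
        ∀ x y : ℤ, bqf (a, b, c) (A 0 0 * x + A 0 1 * y) (A 1 0 * x + A 1 1 * y) =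
          bqf (a, b, c) x y} =
    {pu : ℤ × ℤ | pu.1^2 + b*pu.1*pu.2 + a*c*pu.2^2 = 1}.ncard := by
  rw [← Nat.card_coe_set_eq]
  refine (Nat.card_eq_of_bijective (bqfToAuto a b c) ⟨?_, ?_⟩).symm
  · rintro ⟨⟨p1, u1⟩, h1⟩ ⟨⟨p2, u2⟩, h2⟩ hxy
    have hm := congrArg Subtype.val hxy
    simp only [bqfToAuto] at hm
    have e1 : p1 = p2 := by have := congrFun (congrFun hm 0) 0; simpa using this
    have e2 : a * u1 = a * u2 := by have := congrFun (congrFun hm 1) 0; simpa using this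
    exact Subtype.ext (Prod.ext e1 (mul_left_cancel₀ ha.ne' e2))
  · rintro ⟨A, hdet, hf⟩
    obtain ⟨p, u, hrel, hA⟩ := bqf_auto_surj a b c ha hprim A hdet hf
    exact ⟨⟨(p, u), hrel⟩, Subtype.ext hA.symm⟩

theorem bqf_count_neg3 (a b c : ℤ) (h : b^2 - 4*a*c = -3) :
    ({pu : ℤ × ℤ | pu.1^2 + b*pu.1*pu.2 + a*c*pu.2^2 = 1}).ncard = 6 := by
  obtain ⟨k, hk⟩ : Odd b := by
    rcases Int.even_or_odd b with ⟨j, hj⟩ | hodd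
    · exfalso
      have hj2 : b = 2*j := by omega
      have hd : b^2 - 4*a*c = 4*(j^2 - a*c) := by
        linear_combination (b + 2*j)*hj2
      obtain ⟨m, hm⟩ : ∃ m, j^2 - a*c = m := ⟨_, rfl⟩
      rw [hm] at hd; rw [h] at hd; omega
    · exact hodd
  have h4 : 4*(a*c) = 4*(k^2+k+1) := by linear_combination -h + (b+2*k+1)*hk
  have hac : a*c = k^2+k+1 := by linarith
  have hset : {pu : ℤ × ℤ | pu.1^2 + b*pu.1*pu.2 + a*c*pu.2^2 = 1} =
      {((1:ℤ),(0:ℤ)), (-1,0), (-k,1), (-k-1,1), (k+1,-1), (k,-1)} := by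
    ext ⟨p, u⟩
    simp only [Set.mem_setOf_eq, Set.mem_insert_iff, Set.mem_singleton_iff, Prod.mk.injEq]
    constructor
    · intro hrel
      have key : (2*p+b*u)^2 + 3*u^2 = 4 := by linear_combination 4*hrel + u^2*h
      have hub : -1 ≤ u ∧ u ≤ 1 := by
        constructor <;> nlinarith [sq_nonneg (2*p+b*u)]
      obtain ⟨hu1, hu2⟩ := hub
      interval_cases u
      · have hz : (2*p-b-1)*(2*p-b+1) = 0 := by linear_combination key
        rcases mul_eq_zero.mp hz with hz | hz <;> omega
      · have hz : (2*p-2)*(2*p+2) = 0 := by linear_combination key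
        rcases mul_eq_zero.mp hz with hz | hz <;> omega
      · have hz : (2*p+b-1)*(2*p+b+1) = 0 := by linear_combination key
        rcases mul_eq_zero.mp hz with hz | hz <;> omega
    · rintro (⟨h1, rfl⟩ | ⟨h1, rfl⟩ | ⟨h1, rfl⟩ | ⟨h1, rfl⟩ | ⟨h1, rfl⟩ | ⟨h1, rfl⟩)
      · linear_combination (p+1)*h1
      · linear_combination (p-1)*h1
      · linear_combination hac + p*hk + (p+k+1)*h1
      · linear_combination hac + p*hk + (p+k)*h1
      · linear_combination hac - p*hk + (p-k)*h1
      · linear_combination hac - p*hk + (p-k-1)*h1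
  rw [hset]
  rw [Set.ncard_insert_of_notMem (by intro hmem; simp only [Set.mem_insert_iff,
      Set.mem_singleton_iff, Prod.mk.injEq] at hmem; omega),
    Set.ncard_insert_of_notMem (by intro hmem; simp only [Set.mem_insert_iff,
      Set.mem_singleton_iff, Prod.mk.injEq] at hmem; omega),
    Set.ncard_insert_of_notMem (by intro hmem; simp only [Set.mem_insert_iff,
      Set.mem_singleton_iff, Prod.mk.injEq] at hmem; omega),
    Set.ncard_insert_of_notMem (by intro hmem; simp only [Set.mem_insert_iff,
      Set.mem_singleton_iff, Prod.mk.injEq] at hmem; omega),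
    Set.ncard_pair (by intro hmem; simp only [Prod.mk.injEq] at hmem; omega)]

theorem bqf_count_neg4 (a b c : ℤ) (h : b^2 - 4*a*c = -4) :
    ({pu : ℤ × ℤ | pu.1^2 + b*pu.1*pu.2 + a*c*pu.2^2 = 1}).ncard = 4 := by
  obtain ⟨k, hk0⟩ : Even b := by
    rcases Int.even_or_odd b with heven | ⟨j, hj⟩
    · exact heven
    · exfalso
      have hd : b^2 - 4*a*c = 4*(j^2 + j - a*c) + 1 := by
        linear_combination (b + 2*j + 1)*hj
      obtain ⟨m, hm⟩ : ∃ m, j^2 + j - a*c = m := ⟨_, rfl⟩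
      rw [hm] at hd; rw [h] at hd; omega
  have hk : b = 2*k := by omega
  have h4 : 4*(a*c) = 4*(k^2+1) := by linear_combination -h + (b+2*k)*hk
  have hac : a*c = k^2+1 := by linarith
  have hset : {pu : ℤ × ℤ | pu.1^2 + b*pu.1*pu.2 + a*c*pu.2^2 = 1} =
      {((1:ℤ),(0:ℤ)), (-1,0), (-k,1), (k,-1)} := by
    ext ⟨p, u⟩
    simp only [Set.mem_setOf_eq, Set.mem_insert_iff, Set.mem_singleton_iff, Prod.mk.injEq]
    constructor
    · intro hrel
      have key : (2*p+b*u)^2 + 4*u^2 = 4 := by linear_combination 4*hrel + u^2*h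
      have hub : -1 ≤ u ∧ u ≤ 1 := by
        constructor <;> nlinarith [sq_nonneg (2*p+b*u)]
      obtain ⟨hu1, hu2⟩ := hub
      interval_cases u
      · have hz : (2*p-b)^2 = 0 := by linear_combination key
        have hz2 : 2*p-b = 0 := by
          have := sq_eq_zero_iff.mp hz
          linarith
        omega
      · have hz : (2*p-2)*(2*p+2) = 0 := by linear_combination key
        rcases mul_eq_zero.mp hz with hz | hz <;> omega
      · have hz : (2*p+b)^2 = 0 := by linear_combination key
        have hz2 : 2*p+b = 0 := by
          have := sq_eq_zero_iff.mp hz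
          linarith
        omega
    · rintro (⟨h1, rfl⟩ | ⟨h1, rfl⟩ | ⟨h1, rfl⟩ | ⟨h1, rfl⟩)
      · linear_combination (p+1)*h1
      · linear_combination (p-1)*h1
      · linear_combination hac + p*hk + (p+k)*h1
      · linear_combination hac - p*hk + (p-k)*h1
  rw [hset]
  rw [Set.ncard_insert_of_notMem (by intro hmem; simp only [Set.mem_insert_iff,
      Set.mem_singleton_iff, Prod.mk.injEq] at hmem; omega),
    Set.ncard_insert_of_notMem (by intro hmem; simp only [Set.mem_insert_iff,
      Set.mem_singleton_iff, Prod.mk.injEq] at hmem; omega),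
    Set.ncard_pair (by intro hmem; simp only [Prod.mk.injEq] at hmem; omega)]

theorem bqf_count_lt (a b c : ℤ) (hneg : b^2 - 4*a*c < 0)
    (h3 : b^2 - 4*a*c ≠ -3) (h4 : b^2 - 4*a*c ≠ -4) :
    ({pu : ℤ × ℤ | pu.1^2 + b*pu.1*pu.2 + a*c*pu.2^2 = 1}).ncard = 2 := by
  have h7 : b^2 - 4*a*c ≤ -7 := by
    rcases Int.even_or_odd b with ⟨j, hj⟩ | ⟨j, hj⟩
    · have hj2 : b = 2*j := by omega
      have hd : b^2 - 4*a*c = 4*(j^2 - a*c) := by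
        linear_combination (b + 2*j)*hj2
      obtain ⟨m, hm⟩ : ∃ m, j^2 - a*c = m := ⟨_, rfl⟩
      rw [hm] at hd; rw [hd] at hneg h3 h4 ⊢; omega
    · have hd : b^2 - 4*a*c = 4*(j^2 + j - a*c) + 1 := by
        linear_combination (b + 2*j + 1)*hj
      obtain ⟨m, hm⟩ : ∃ m, j^2 + j - a*c = m := ⟨_, rfl⟩
      rw [hm] at hd; rw [hd] at hneg h3 h4 ⊢; omega
  have hset : {pu : ℤ × ℤ | pu.1^2 + b*pu.1*pu.2 + a*c*pu.2^2 = 1} =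
      {((1:ℤ),(0:ℤ)), (-1,0)} := by
    ext ⟨p, u⟩
    simp only [Set.mem_setOf_eq, Set.mem_insert_iff, Set.mem_singleton_iff, Prod.mk.injEq]
    constructor
    · intro hrel
      have key : (2*p+b*u)^2 - (b^2-4*a*c)*u^2 = 4 := by linear_combination 4*hrel
      have hu2 : u^2 ≤ 0 := by nlinarith [sq_nonneg (2*p+b*u), sq_nonneg u]
      have hu : u = 0 := by
        have := le_antisymm hu2 (sq_nonneg u)
        exact sq_eq_zero_iff.mp this
      subst hu
      have hz : (p-1)*(p+1) = 0 := by linear_combination hrel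
      rcases mul_eq_zero.mp hz with hz | hz <;> omega
    · rintro (⟨h1, rfl⟩ | ⟨h1, rfl⟩)
      · linear_combination (p+1)*h1
      · linear_combination (p-1)*h1
  rw [hset, Set.ncard_pair (by intro hmem; simp only [Prod.mk.injEq] at hmem; omega)]

/-- A positive definite primitive integral binary quadratic form of discriminant `D < 0`
has exactly `6` proper automorphs in `SL₂(ℤ)` when `D = -3`, exactly `4` when `D = -4`,
and exactly `2` when `D < -4`. -/
theorem stmt_12 (a b c D : ℤ) (ha : 0 < a) (hprim : Int.gcd a (Int.gcd b c) = 1)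
    (hD : b ^ 2 - 4 * a * c = D) (hneg : D < 0) :
    Nat.card {A : Matrix (Fin 2) (Fin 2) ℤ // A.det = 1 ∧
        ∀ x y : ℤ, bqf (a, b, c) (A 0 0 * x + A 0 1 * y) (A 1 0 * x + A 1 1 * y) =
          bqf (a, b, c) x y} =
      if D = -3 then 6 else if D = -4 then 4 else 2 := by
  subst hD
  rw [bqf_card_eq a b c ha hprim]
  by_cases h3 : b ^ 2 - 4 * a * c = -3
  · rw [if_pos h3, bqf_count_neg3 a b c (by linarith)]
  · rw [if_neg h3]
    by_cases h4 : b ^ 2 - 4 * a * c = -4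
    · rw [if_pos h4, bqf_count_neg4 a b c (by linarith)]
    · rw [if_neg h4, bqf_count_lt a b c (by linarith) (fun hc => h3 (by linarith))
        (fun hc => h4 (by linarith))]
end

section
/- Let p be an odd prime and n a positive integer. Then n is primitively represented as a sum of three squares over ℤ_p: there exist x, y, z ∈ ℤ_p with x²+y²+z² = n such that not all of x, y, z lie in pℤ_p. -/
lemma padic_dvd_iff_toZMod (p : ℕ) [Fact p.Prime] (x : ℤ_[p]) :
    (p : ℤ_[p]) ∣ x ↔ PadicInt.toZMod x = 0 := by
  rw [← RingHom.mem_ker, PadicInt.ker_toZMod,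
    PadicInt.maximalIdeal_eq_span_p, Ideal.mem_span_singleton]

/-- Every positive integer is primitively represented as a sum of three squares over `ℤ_p`
for every odd prime `p`. -/
theorem stmt_14 (p : ℕ) [Fact p.Prime] (hp : p ≠ 2) (n : ℕ) (hn : 0 < n) :
    ∃ x y z : ℤ_[p], x ^ 2 + y ^ 2 + z ^ 2 = (n : ℤ_[p]) ∧
      ¬((p : ℤ_[p]) ∣ x ∧ (p : ℤ_[p]) ∣ y ∧ (p : ℤ_[p]) ∣ z) := by
  obtain ⟨b, c, hbc⟩ := ZMod.sq_add_sq p ((n : ZMod p) - 1)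
  -- lifts of b, c
  set B : ℤ_[p] := (b.val : ℤ_[p])
  set C : ℤ_[p] := (c.val : ℤ_[p])
  set m : ℤ_[p] := (n : ℤ_[p]) - B ^ 2 - C ^ 2 with hm
  have htB : PadicInt.toZMod B = b := by
    simp [B, map_natCast, ZMod.natCast_val, ZMod.cast_id]
  have htC : PadicInt.toZMod C = c := by
    simp [C, map_natCast, ZMod.natCast_val, ZMod.cast_id]
  have hm1 : PadicInt.toZMod (1 - m) = 0 := by
    simp only [hm, map_sub, map_pow, map_one, map_natCast, htB, htC]
    linear_combination hbc
  -- Hensel's lemma for X^2 - m at 1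
  have h2 : ‖(2 : ℤ_[p])‖ = 1 := by
    rcases lt_or_eq_of_le (PadicInt.norm_le_one (2 : ℤ_[p])) with h | h
    · exfalso
      rw [PadicInt.norm_lt_one_iff_dvd, padic_dvd_iff_toZMod] at h
      have h2' : ((2 : ℕ) : ZMod p) = 0 := by
        simpa [map_ofNat] using h
      rw [ZMod.natCast_eq_zero_iff] at h2'
      exact hp ((Nat.prime_dvd_prime_iff_eq (Fact.out) Nat.prime_two).mp h2')
    · exact h
  set F : Polynomial ℤ_[p] := Polynomial.X ^ 2 - Polynomial.C m with hF
  have hev : F.eval 1 = 1 - m := by simp [hF]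
  have hdv : F.derivative.eval 1 = 2 := by
    simp [hF, Polynomial.derivative_pow]
  have hnorm : ‖F.eval 1‖ < ‖F.derivative.eval 1‖ ^ 2 := by
    rw [hev, hdv, h2, one_pow, PadicInt.norm_lt_one_iff_dvd,
      padic_dvd_iff_toZMod]
    exact hm1
  obtain ⟨z, hz, hzd, -, -⟩ := hensels_lemma hnorm
  refine ⟨z, B, C, ?_, ?_⟩
  · have hzm : z ^ 2 = m := by
      have h' := hz
      simp only [hF, Polynomial.coe_aeval_eq_eval, Polynomial.eval_sub, Polynomial.eval_pow, Polynomial.eval_X,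
        Polynomial.eval_C] at h'
      exact sub_eq_zero.mp h'
    rw [hzm, hm]; ring
  · rintro ⟨hzdvd, -, -⟩
    rw [padic_dvd_iff_toZMod] at hzdvd
    rw [Polynomial.coe_aeval_eq_eval, hdv, h2] at hzd
    have : PadicInt.toZMod (z - 1) = 0 := by
      rw [← padic_dvd_iff_toZMod, ← PadicInt.norm_lt_one_iff_dvd]
      exact hzd
    rw [map_sub, map_one, hzdvd, zero_sub, neg_eq_zero] at this
    exact one_ne_zero this
end

section
/- Let n be a positive integer with gcd(n,10) = 1. Then for every prime p, n is primitively represented by x²+y²+10z² over ℤ_p: there exist x, y, z ∈ ℤ_p with x²+y²+10z² = n such that not all of x, y, z lie in pℤ_p. -/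
open Polynomial

/-- Square roots in `ℤ_[p]` via Hensel's lemma. -/
lemma padic_sqrt {p : ℕ} [Fact p.Prime] (t a : ℤ_[p]) (ha : ‖a‖ = 1)
    (h : ‖t - a ^ 2‖ < ‖(2 : ℤ_[p])‖ ^ 2) : ∃ x : ℤ_[p], x ^ 2 = t ∧ ‖x‖ = 1 := by
  have heval : (X ^ 2 - C t : Polynomial ℤ_[p]).eval a = a ^ 2 - t := by simp
  have hderiv : (X ^ 2 - C t : Polynomial ℤ_[p]).derivative.eval a = 2 * a := by
    simp; exact Or.inl one_add_one_eq_two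
  have hnorm : ‖(X ^ 2 - C t : Polynomial ℤ_[p]).eval a‖ <
      ‖(X ^ 2 - C t : Polynomial ℤ_[p]).derivative.eval a‖ ^ 2 := by
    rw [heval, hderiv, norm_mul, ha, mul_one, ← norm_neg, neg_sub]
    exact h
  obtain ⟨x, hx0, hx1, -, -⟩ := hensels_lemma hnorm
  rw [heval] at *
  rw [Polynomial.coe_aeval_eq_eval] at hx0 hx1
  rw [hderiv] at hx1
  have hx2 : x ^ 2 = t := by
    have := hx0
    simp only [Polynomial.eval_sub, Polynomial.eval_pow, Polynomial.eval_X,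
      Polynomial.eval_C] at this
    exact sub_eq_zero.mp this
  refine ⟨x, hx2, ?_⟩
  have hlt : ‖x - a‖ < 1 := by
    calc ‖x - a‖ < ‖2 * a‖ := hx1
    _ = ‖(2 : ℤ_[p])‖ := by rw [norm_mul, ha, mul_one]
    _ ≤ 1 := PadicInt.norm_le_one _
  by_cases hne : ‖a‖ = ‖x - a‖
  · rw [ha] at hne; exact absurd hne.symm (ne_of_lt hlt)
  · have : ‖a + (x - a)‖ = max ‖a‖ ‖x - a‖ := PadicInt.norm_add_eq_max_of_ne hne
    simpa [ha, max_eq_left hlt.le] using this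


lemma rep_two {p : ℕ} [Fact p.Prime] (hp : p = 2) (n : ℕ) (hodd : n % 2 = 1) :
    ∃ x y z : ℤ_[p], x ^ 2 + y ^ 2 + 10 * z ^ 2 = (n : ℤ_[p]) ∧
      ¬((p : ℤ_[p]) ∣ x ∧ (p : ℤ_[p]) ∣ y ∧ (p : ℤ_[p]) ∣ z) := by
  subst hp
  obtain ⟨b, c, h8⟩ : ∃ b c : ℕ, (8 : ℤ) ∣ ((n : ℤ) - 1 - (b : ℤ) ^ 2 - 10 * (c : ℤ) ^ 2) := by
    have h : n % 8 = 1 ∨ n % 8 = 3 ∨ n % 8 = 5 ∨ n % 8 = 7 := by omega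
    rcases h with h | h | h | h
    · exact ⟨0, 0, by push_cast; omega⟩
    · exact ⟨0, 1, by push_cast; omega⟩
    · exact ⟨2, 0, by push_cast; omega⟩
    · exact ⟨2, 1, by push_cast; omega⟩
  set t : ℤ_[2] := (n : ℤ_[2]) - (b : ℤ_[2]) ^ 2 - 10 * (c : ℤ_[2]) ^ 2 with ht
  have hcast : t - 1 ^ 2 = (((n : ℤ) - 1 - (b : ℤ) ^ 2 - 10 * (c : ℤ) ^ 2 : ℤ) : ℤ_[2]) := by
    push_cast [ht]; ring
  have hnorm2 : ‖(2 : ℤ_[2])‖ = 2⁻¹ := by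
    have := PadicInt.norm_p (p := 2); simpa using this
  have hle : ‖t - 1 ^ 2‖ ≤ ((2 : ℕ) : ℝ) ^ (-(3 : ℕ) : ℤ) := by
    rw [hcast, PadicInt.norm_int_le_pow_iff_dvd]
    exact_mod_cast h8
  have hlt : ‖t - 1 ^ 2‖ < ‖(2 : ℤ_[2])‖ ^ 2 := by
    rw [hnorm2]
    calc ‖t - 1 ^ 2‖ ≤ ((2 : ℕ) : ℝ) ^ (-(3 : ℕ) : ℤ) := hle
    _ < (2 : ℝ)⁻¹ ^ 2 := by norm_num
  obtain ⟨x, hx, hxnorm⟩ := padic_sqrt t 1 (by simp) hlt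
  refine ⟨x, (b : ℤ_[2]), (c : ℤ_[2]), by rw [hx, ht]; push_cast; ring, ?_⟩
  rintro ⟨hdvd, -, -⟩
  rw [← PadicInt.norm_lt_one_iff_dvd] at hdvd
  rw [hxnorm] at hdvd
  exact lt_irrefl _ hdvd

lemma rep_odd {p : ℕ} [Fact p.Prime] (hp2 : p ≠ 2) (n c : ℕ) (A B : ZMod p) (hA : A ≠ 0)
    (hAB : A ^ 2 + B ^ 2 = (n : ZMod p) - 10 * (c : ZMod p) ^ 2) :
    ∃ x y z : ℤ_[p], x ^ 2 + y ^ 2 + 10 * z ^ 2 = (n : ℤ_[p]) ∧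
      ¬((p : ℤ_[p]) ∣ x ∧ (p : ℤ_[p]) ∣ y ∧ (p : ℤ_[p]) ∣ z) := by
  have hp : p.Prime := Fact.out
  set a : ℤ_[p] := (A.val : ℤ_[p]) with hadef
  have ha : ‖a‖ = 1 := by
    rcases lt_or_eq_of_le (PadicInt.norm_le_one a) with hlt | heq
    · exfalso
      have h1 : ((A.val : ℤ) : ℤ_[p]) = a := by push_cast [hadef]; ring
      rw [← h1, PadicInt.norm_int_lt_one_iff_dvd] at hlt
      have h2 : (p : ℕ) ∣ A.val := by exact_mod_cast hlt
      have h3 : ((A.val : ℕ) : ZMod p) = 0 := (ZMod.natCast_eq_zero_iff _ _).mpr h2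
      rw [ZMod.natCast_val, ZMod.cast_id] at h3
      exact hA h3
    · exact heq
  have h2norm : ‖(2 : ℤ_[p])‖ = 1 := by
    rcases lt_or_eq_of_le (PadicInt.norm_le_one (2 : ℤ_[p])) with hlt | heq
    · exfalso
      have h1 : (((2 : ℤ)) : ℤ_[p]) = (2 : ℤ_[p]) := by push_cast; ring
      rw [← h1, PadicInt.norm_int_lt_one_iff_dvd] at hlt
      have h2 : p ∣ 2 := by exact_mod_cast hlt
      exact hp2 ((Nat.prime_dvd_prime_iff_eq hp Nat.prime_two).mp h2)
    · exact heq
  set t : ℤ_[p] := (n : ℤ_[p]) - (B.val : ℤ_[p]) ^ 2 - 10 * (c : ℤ_[p]) ^ 2 with ht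
  set m : ℤ := (n : ℤ) - (B.val : ℤ) ^ 2 - 10 * (c : ℤ) ^ 2 - (A.val : ℤ) ^ 2 with hm
  have hcast : t - a ^ 2 = (m : ℤ_[p]) := by push_cast [ht, hm, hadef]; ring
  have hdvd : (p : ℤ) ∣ m := by
    rw [← ZMod.intCast_zmod_eq_zero_iff_dvd]
    push_cast [hm]
    rw [ZMod.natCast_val, ZMod.cast_id, ZMod.natCast_val, ZMod.cast_id]
    linear_combination -hAB
  have hle : ‖t - a ^ 2‖ ≤ (p : ℝ) ^ (-(1 : ℕ) : ℤ) := by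
    rw [hcast, PadicInt.norm_int_le_pow_iff_dvd]
    simpa using hdvd
  have hlt : ‖t - a ^ 2‖ < ‖(2 : ℤ_[p])‖ ^ 2 := by
    rw [h2norm, one_pow]
    refine lt_of_le_of_lt hle ?_
    have hp1 : (1 : ℝ) < p := by exact_mod_cast hp.one_lt
    calc (p : ℝ) ^ (-(1 : ℕ) : ℤ) = (p : ℝ)⁻¹ := by norm_num
    _ < 1 := by rw [inv_lt_one_iff₀]; right; exact hp1
  obtain ⟨x, hx, hxnorm⟩ := padic_sqrt t a ha hlt
  refine ⟨x, (B.val : ℤ_[p]), (c : ℤ_[p]), by rw [hx, ht]; ring, ?_⟩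
  rintro ⟨hdvd', -, -⟩
  rw [← PadicInt.norm_lt_one_iff_dvd] at hdvd'
  rw [hxnorm] at hdvd'
  exact lt_irrefl _ hdvd'

/-- Every positive integer coprime with `10` is primitively represented by `x²+y²+10z²`
over `ℤ_p` for every prime `p`. -/
theorem stmt_15 (n : ℕ) (hn : 0 < n) (hcop : Nat.gcd n 10 = 1) (p : ℕ) [Fact p.Prime] :
    ∃ x y z : ℤ_[p], x ^ 2 + y ^ 2 + 10 * z ^ 2 = (n : ℤ_[p]) ∧
      ¬((p : ℤ_[p]) ∣ x ∧ (p : ℤ_[p]) ∣ y ∧ (p : ℤ_[p]) ∣ z) := by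
  have hp : p.Prime := Fact.out
  by_cases hp2 : p = 2
  · have hodd : n % 2 = 1 := by
      have h2 : ¬ (2 ∣ n) := fun h => by
        have := Nat.dvd_gcd h (show 2 ∣ 10 by norm_num)
        omega
      omega
    exact rep_two hp2 n hodd
  · obtain ⟨c, hc⟩ : ∃ c : ℕ, (n : ZMod p) - 10 * (c : ZMod p) ^ 2 ≠ 0 := by
      by_cases hn0 : (n : ZMod p) = 0
      · have hpn : p ∣ n := (ZMod.natCast_eq_zero_iff _ _).mp hn0
        have hp10 : ¬ (p ∣ 10) := fun h => by
          have := Nat.dvd_gcd hpn h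
          rw [hcop] at this
          exact Nat.Prime.one_lt hp |>.ne' (Nat.le_antisymm (Nat.le_of_dvd one_pos this) hp.one_lt.le ▸ rfl)
        refine ⟨1, ?_⟩
        rw [hn0]
        simp only [Nat.cast_one, one_pow, mul_one, zero_sub, ne_eq, neg_eq_zero]
        intro h10
        exact hp10 (by exact_mod_cast (ZMod.natCast_eq_zero_iff 10 p).mp (by exact_mod_cast h10))
      · exact ⟨0, by simpa using hn0⟩
    obtain ⟨A, B, hAB⟩ := ZMod.sq_add_sq p ((n : ZMod p) - 10 * (c : ZMod p) ^ 2)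
    have hne : A ≠ 0 ∨ B ≠ 0 := by
      by_contra h
      push_neg at h
      rw [h.1, h.2] at hAB
      simp at hAB
      exact hc hAB.symm
    rcases hne with hA | hB
    · exact rep_odd hp2 n c A B hA hAB
    · exact rep_odd hp2 n c B A hB (by linear_combination hAB)
end

section
/- Let n be an integer with gcd(n,5) = 1 and let k ≥ 1. Then the number of triples (x,y,z) ∈ (ℤ/5^kℤ)³ with x²+y²+10z² ≡ n (mod 5^k) equals 4·5^{2k−1}, and every such solution is primitive (for every such triple, x and y are not both divisible by 5). In particular, the counts divided by 5^{2k} equal 4/5 for all k, which is the primitive local density β_5 of representations of n by x²+y²+10z² at the prime 5. -/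
lemma sqrt_neg_one_int : ∀ k : ℕ, ∃ t : ℤ, (5:ℤ)^(k+1) ∣ t^2 + 1 := by
  intro k
  induction k with
  | zero => exact ⟨2, by norm_num⟩
  | succ k ih =>
    obtain ⟨t, a, ha⟩ := ih
    exact ⟨t - 2*t*a*5^(k+1), a + 4*a^2*5^k*(t^2-1),
      by linear_combination (1 - 20*a*(5:ℤ)^k) * ha⟩

/-- For `gcd(n,5) = 1` and `k ≥ 1`, the congruence `x²+y²+10z² ≡ n (mod 5^k)` has exactly
`4·5^{2k-1}` solutions, each of them primitive (`x`, `y` not both divisible by `5`); in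
particular the normalized counts equal `4/5` for all `k`, the primitive local density at
the prime `5`. -/
theorem stmt_16 (n : ℤ) (hn : Int.gcd n 5 = 1) (k : ℕ) (hk : 1 ≤ k) :
    Nat.card {v : ZMod (5 ^ k) × ZMod (5 ^ k) × ZMod (5 ^ k) //
        v.1 ^ 2 + v.2.1 ^ 2 + 10 * v.2.2 ^ 2 = (n : ZMod (5 ^ k))} =
      4 * 5 ^ (2 * k - 1) ∧
    (∀ x y z : ZMod (5 ^ k), x ^ 2 + y ^ 2 + 10 * z ^ 2 = (n : ZMod (5 ^ k)) →
      ¬((5 : ZMod (5 ^ k)) ∣ x ∧ (5 : ZMod (5 ^ k)) ∣ y)) ∧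
    (Nat.card {v : ZMod (5 ^ k) × ZMod (5 ^ k) × ZMod (5 ^ k) //
        v.1 ^ 2 + v.2.1 ^ 2 + 10 * v.2.2 ^ 2 = (n : ZMod (5 ^ k))} : ℚ) / 5 ^ (2 * k) =
      4 / 5 := by
  haveI : NeZero (5 ^ k) := ⟨by positivity⟩
  set R := ZMod (5 ^ k)
  -- 5 is nilpotent
  have h5k : (5 : R) ^ k = 0 := by
    have := ZMod.natCast_self (5 ^ k)
    push_cast at this
    exact this
  have h5nil : IsNilpotent (5 : R) := ⟨k, h5k⟩
  -- n is a unit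
  have hnu : IsUnit ((n : ℤ) : R) := by
    have hc : IsCoprime n ((5:ℤ)^k) :=
      (Int.isCoprime_iff_gcd_eq_one.mpr hn).pow_right
    have := hc.map (Int.castRingHom R)
    simp only [map_pow, map_ofNat] at this
    rw [h5k] at this
    exact isCoprime_zero_right.mp this
  -- 2 is a unit
  have h2 : IsUnit (2 : R) := by
    have := (ZMod.isUnit_iff_coprime 2 (5 ^ k)).mpr (Nat.Coprime.pow_right k (by decide))
    simpa using this
  -- n - 10 z^2 is always a unit
  have hm : ∀ z : R, IsUnit ((n : R) - 10 * z ^ 2) := by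
    intro z
    have hnil : IsNilpotent (-(10 * z ^ 2) : R) := by
      refine ⟨k, ?_⟩
      have hh : (-(10 * z ^ 2) : R) ^ k = (5 : R) ^ k * (-(2 * z ^ 2)) ^ k := by
        rw [← mul_pow]; congr 1; ring
      rw [hh, h5k, zero_mul]
    have := hnil.isUnit_add_left_of_commute hnu (Commute.all _ _)
    simpa [sub_eq_add_neg] using this
  -- a square root of -1
  obtain ⟨t, ht⟩ := sqrt_neg_one_int (k - 1)
  rw [show k - 1 + 1 = k by omega] at ht
  set i : R := ((t : ℤ) : R) with hidef
  have hi2 : i ^ 2 = -1 := by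
    have h0 : ((t ^ 2 + 1 : ℤ) : R) = 0 := by
      rw [ZMod.intCast_zmod_eq_zero_iff_dvd]
      push_cast
      exact ht
    push_cast at h0
    linear_combination h0
  have key : ∀ x y z : R, x ^ 2 + y ^ 2 + 10 * z ^ 2 = (n : R) → IsUnit (x + i * y) := by
    intro x y z h
    apply isUnit_of_mul_isUnit_left (y := x - i * y)
    rw [show (x + i * y) * (x - i * y) = (n : R) - 10 * z ^ 2 from by
      linear_combination (-(y ^ 2)) * hi2 + h]
    exact hm z
  set A : R := ↑h2.unit⁻¹ with hAdef
  have h2u : (2 : R) * A = 1 := h2.mul_val_inv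
  set S := {v : R × R × R // v.1 ^ 2 + v.2.1 ^ 2 + 10 * v.2.2 ^ 2 = (n : R)} with hSdef
  have e : S ≃ Rˣ × R :=
  { toFun := fun s => ⟨(key s.1.1 s.1.2.1 s.1.2.2 s.2).unit, s.1.2.2⟩
    invFun := fun p =>
      ⟨((↑p.1 + ((n : R) - 10 * p.2 ^ 2) * ↑p.1⁻¹) * A,
        (((n : R) - 10 * p.2 ^ 2) * ↑p.1⁻¹ - ↑p.1) * i * A, p.2), by
        have huv : (↑p.1 : R) * ↑p.1⁻¹ = 1 := p.1.mul_inv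
        show ((↑p.1 + ((n : R) - 10 * p.2 ^ 2) * ↑p.1⁻¹) * A) ^ 2 +
          ((((n : R) - 10 * p.2 ^ 2) * ↑p.1⁻¹ - ↑p.1) * i * A) ^ 2 + 10 * p.2 ^ 2 = (n : R)
        linear_combination ((((n : R) - 10 * p.2 ^ 2) * ↑p.1⁻¹ - ↑p.1) ^ 2 * A ^ 2) * hi2 +
          ((2 * A + 1) * ↑p.1 * (((n : R) - 10 * p.2 ^ 2) * ↑p.1⁻¹)) * h2u +
          ((n : R) - 10 * p.2 ^ 2) * huv⟩
    left_inv := by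
      rintro ⟨⟨x, y, z⟩, h⟩
      have hu := key x y z h
      have hus : (↑hu.unit : R) = x + i * y := hu.unit_spec
      have huv : (↑hu.unit : R) * ↑hu.unit⁻¹ = 1 := hu.unit.mul_inv
      have h3 : (↑hu.unit : R) * (x - i * y) = (n : R) - 10 * z ^ 2 := by
        rw [hus]; linear_combination (-(y ^ 2)) * hi2 + h
      have hv : ((n : R) - 10 * z ^ 2) * ↑hu.unit⁻¹ = x - i * y := by
        rw [← h3, mul_comm (↑hu.unit : R) (x - i * y), mul_assoc, huv, mul_one]
      apply Subtype.ext
      refine Prod.ext ?_ (Prod.ext ?_ rfl)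
      · show (↑hu.unit + ((n : R) - 10 * z ^ 2) * ↑hu.unit⁻¹) * A = x
        rw [hv, hus]; linear_combination x * h2u
      · show (((n : R) - 10 * z ^ 2) * ↑hu.unit⁻¹ - ↑hu.unit) * i * A = y
        rw [hv, hus]; linear_combination (-2 * y * A) * hi2 + y * h2u
    right_inv := by
      rintro ⟨u, z⟩
      refine Prod.ext (Units.ext ?_) rfl
      simp only [IsUnit.unit_spec]
      linear_combination ((((n : R) - 10 * z ^ 2) * ↑u⁻¹ - ↑u) * A) * hi2 + (↑u : R) * h2u }
  have hcard : Nat.card S = 4 * 5 ^ (2 * k - 1) := by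
    rw [Nat.card_congr e, Nat.card_prod, Nat.card_eq_fintype_card, Nat.card_eq_fintype_card,
      ZMod.card_units_eq_totient, ZMod.card, Nat.totient_prime_pow (by norm_num) hk]
    have h2k : 2 * k - 1 = (k - 1) + k := by omega
    rw [h2k, pow_add]; ring
  refine ⟨hcard, ?_, ?_⟩
  · rintro x y z h ⟨⟨cx, hcx⟩, ⟨cy, hcy⟩⟩
    have hkdvd : (5 : ℕ) ∣ 5 ^ k := dvd_pow_self 5 (by omega)
    let f : R →+* ZMod 5 := ZMod.castHom hkdvd (ZMod 5)
    have hf := congrArg f h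
    rw [hcx, hcy] at hf
    simp only [map_add, map_mul, map_pow, map_ofNat, map_intCast] at hf
    have e5 : (5 : ZMod 5) = 0 := by decide
    have e10 : (10 : ZMod 5) = 0 := by decide
    rw [e5, e10] at hf
    simp only [zero_mul, mul_zero, zero_pow, add_zero, zero_add, ne_eq,
      OfNat.ofNat_ne_zero, not_false_eq_true] at hf
    have h0 : ((n : ℤ) : ZMod 5) = 0 := (map_intCast f n).symm.trans hf.symm
    have hdvd : ((5 : ℕ) : ℤ) ∣ n := (ZMod.intCast_zmod_eq_zero_iff_dvd n 5).mp h0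
    have hdvd5 : (5 : ℤ) ∣ n := by exact_mod_cast hdvd
    have : (5 : ℤ) ∣ ((Int.gcd n 5 : ℕ) : ℤ) := Int.dvd_coe_gcd hdvd5 (dvd_refl 5)
    rw [hn] at this
    norm_num at this
  · rw [hcard]
    push_cast
    obtain ⟨m, hm2⟩ : ∃ m, 2 * k = m + 1 := ⟨2 * k - 1, by omega⟩
    rw [hm2, Nat.add_sub_cancel, pow_succ, div_eq_div_iff (by positivity) (by norm_num)]
    ring
end
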